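/- Let n ≥ 2 and let T be a computable tree over Fin n whose set of infinite paths [T] is nonempty. If no infinite path of T is a computable function (i.e., [T] is a special effectively closed set), then [T] has cardinality exactly 2^ℵ₀. -/

import Mathlib

/-- The initial segment (f 0, …, f (k-1)) of an infinite sequence f. -/
def initSeg {n : ℕ} (f : ℕ → Fin n) (k : ℕ) : List (Fin n) :=
  List.ofFn (fun i : Fin k => f i)

/-- A tree over `Fin n`: a set of finite strings closed under taking prefixes. -/
def IsTree {n : ℕ} (T : Set (List (Fin n))) : Prop :=
  ∀ σ ∈ T, ∀ τ, τ <+: σ → τ ∈ T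

/-- `f` is an infinite path of `T`: every initial segment of `f` belongs to `T`. -/
def IsPath {n : ℕ} (T : Set (List (Fin n))) (f : ℕ → Fin n) : Prop :=
  ∀ k : ℕ, initSeg f k ∈ T

namespace SpecialAux

variable {n : ℕ}

@[simp] lemma initSeg_length (f : ℕ → Fin n) (k : ℕ) : (initSeg f k).length = k := by
  simp [initSeg]

@[simp] lemma initSeg_zero (f : ℕ → Fin n) : initSeg f 0 = [] := by simp [initSeg]

lemma initSeg_getElem (f : ℕ → Fin n) {k i : ℕ} (h : i < k) :
    (initSeg f k)[i]'(by simpa using h) = f i := by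
  simp [initSeg]

lemma initSeg_succ (f : ℕ → Fin n) (k : ℕ) :
    initSeg f (k + 1) = initSeg f k ++ [f k] := by
  simp only [initSeg, List.ofFn_succ', List.concat_eq_append]
  congr 1

lemma initSeg_prefix (f : ℕ → Fin n) {a b : ℕ} (h : a ≤ b) :
    initSeg f a <+: initSeg f b := by
  rw [List.prefix_iff_eq_take]
  apply List.ext_getElem
  · simp [h]
  · intro i h1 h2
    rw [initSeg_getElem f (by simpa using h1), List.getElem_take,
      initSeg_getElem f (by simp at h2; omega)]

lemma eq_initSeg_of_prefix {f : ℕ → Fin n} {τ : List (Fin n)} {L : ℕ}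
    (h : τ <+: initSeg f L) : τ = initSeg f τ.length := by
  have hle : τ.length ≤ L := by simpa using h.length_le
  apply List.ext_getElem (by simp)
  intro i h1 h2
  rw [h.getElem h1, initSeg_getElem f (by omega), initSeg_getElem f (by simpa using h2)]

lemma prefix_comparable {σ τ ρ : List (Fin n)} (h1 : σ <+: ρ) (h2 : τ <+: ρ) :
    σ <+: τ ∨ τ <+: σ := (List.prefix_or_prefix_of_prefix h1 h2)

lemma getD_prefix {σ ρ : List (Fin n)} (h : σ <+: ρ) {i : ℕ} (hi : i < σ.length) (d : Fin n) :
    ρ.getD i d = σ.getD i d := by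
  have h2 : i < ρ.length := lt_of_lt_of_le hi h.length_le
  rw [List.getD_eq_getElem _ _ hi, List.getD_eq_getElem _ _ h2, h.getElem hi]

/-- `τ` has arbitrarily long extensions in `S`. -/
def Big (S : Set (List (Fin n))) (τ : List (Fin n)) : Prop :=
  ∀ L, ∃ ρ ∈ S, τ <+: ρ ∧ L ≤ ρ.length

lemma Big.mem {S : Set (List (Fin n))} (hpc : ∀ σ ∈ S, ∀ τ, τ <+: σ → τ ∈ S)
    {τ : List (Fin n)} (h : Big S τ) : τ ∈ S := by
  obtain ⟨ρ, hρS, hpre, -⟩ := h 0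
  exact hpc ρ hρS τ hpre

lemma Big.step {S : Set (List (Fin n))} (hpc : ∀ σ ∈ S, ∀ τ, τ <+: σ → τ ∈ S)
    {τ : List (Fin n)} (h : Big S τ) : ∃ a : Fin n, Big S (τ ++ [a]) := by
  by_contra hcon
  simp only [Big] at hcon
  push_neg at hcon
  choose LL hLL using hcon
  obtain ⟨ρ, hρS, hpre, hlen⟩ := h ((Finset.univ.sup LL) + τ.length + 1)
  have hlt : τ.length < ρ.length := by omega
  have hext : τ ++ [ρ[τ.length]] <+: ρ := by
    rw [List.prefix_iff_eq_take] at hpre ⊢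
    have : (τ ++ [ρ[τ.length]]).length = τ.length + 1 := by simp
    rw [this, List.take_succ, ← hpre]
    simp [List.getElem?_eq_getElem hlt]
  have := hLL (ρ[τ.length]) ρ hρS hext
  have hsup : LL (ρ[τ.length]) ≤ Finset.univ.sup LL := Finset.le_sup (Finset.mem_univ _)
  omega

lemma koenig (hn : 0 < n) (S : Set (List (Fin n)))
    (hpc : ∀ σ ∈ S, ∀ τ, τ <+: σ → τ ∈ S)
    (hlen : ∀ L, ∃ τ ∈ S, τ.length = L) :
    ∃ g : ℕ → Fin n, ∀ k, initSeg g k ∈ S := by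
  have hbignil : Big S [] := by
    intro L
    obtain ⟨τ, hτ, hl⟩ := hlen L
    exact ⟨τ, hτ, List.nil_prefix, by omega⟩
  let step : {τ : List (Fin n) // Big S τ} → {τ' : List (Fin n) // Big S τ'} :=
    fun τ => ⟨τ.1 ++ [Classical.choose (τ.2.step hpc)], Classical.choose_spec (τ.2.step hpc)⟩
  let c : ℕ → {τ : List (Fin n) // Big S τ} := fun k => Nat.rec ⟨[], hbignil⟩ (fun _ p => step p) k
  have hcsucc : ∀ k, (c (k + 1)).1 = (c k).1 ++ [Classical.choose ((c k).2.step hpc)] :=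
    fun k => rfl
  have hclen : ∀ k, (c k).1.length = k := by
    intro k
    induction k with
    | zero => rfl
    | succ k ih => rw [hcsucc]; simp [ih]
  set d : Fin n := ⟨0, hn⟩
  refine ⟨fun m => (c (m + 1)).1.getD m d, ?_⟩
  have key : ∀ k, initSeg (fun m => (c (m + 1)).1.getD m d) k = (c k).1 := by
    intro k
    induction k with
    | zero => simp only [initSeg_zero]; rfl
    | succ k ih =>
      have hg : (c (k + 1)).1.getD k d = Classical.choose ((c k).2.step hpc) := by
        rw [hcsucc, List.getD_eq_getElem _ _ (by simp [hclen]),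
          List.getElem_append_right (by simp [hclen])]
        simp [hclen]
      rw [initSeg_succ, ih, hg, hcsucc]
  intro k
  rw [key]
  exact (c k).2.mem hpc

/-! ### Computability infrastructure -/

lemma primrec_allB {α β : Type} [Primcodable α] [Primcodable β]
    {p : α → β → Bool} {F : α → List β} (hp : Primrec₂ p) (hF : Primrec F) :
    Primrec fun a => (F a).foldr (fun b r => p a b && r) true :=
  Primrec.list_foldr hF (Primrec.const true)
    ((Primrec.and.comp (hp.comp Primrec.fst (Primrec.fst.comp Primrec.snd))
      (Primrec.snd.comp Primrec.snd)).to₂)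

lemma foldr_and_eq_true {α : Type} (p : α → Bool) (l : List α) :
    (l.foldr (fun b r => p b && r) true = true) ↔ ∀ b ∈ l, p b = true := by
  induction l with
  | nil => simp
  | cons a l ih => simp [ih]

/-- Boolean prefix test. -/
def prefixB {n : ℕ} (τ ρ : List (Fin n)) : Bool :=
  (List.range τ.length).foldr (fun i r => decide (τ[i]? = ρ[i]?) && r) true

lemma prefixB_iff {τ ρ : List (Fin n)} : prefixB τ ρ = true ↔ τ <+: ρ := by
  rw [prefixB, foldr_and_eq_true]
  constructor
  · intro h
    have h' : ∀ i < τ.length, τ[i]? = ρ[i]? := by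
      intro i hi
      simpa using h i (List.mem_range.2 hi)
    have hlen : τ.length ≤ ρ.length := by
      by_contra hc
      have := h' ρ.length (by omega)
      rw [List.getElem?_eq_getElem (by omega), List.getElem?_eq_none (le_refl _)] at this
      exact Option.some_ne_none _ this
    rw [List.prefix_iff_eq_take]
    apply List.ext_getElem (by simp [hlen])
    intro i h1 h2
    have hi : i < τ.length := h1
    have := h' i hi
    rw [List.getElem?_eq_getElem hi, List.getElem?_eq_getElem (by omega)] at this
    rw [List.getElem_take]
    simpa using this
  · intro h i hi
    have hi' : i < τ.length := List.mem_range.1 hi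
    simp only [decide_eq_true_eq]
    rw [List.getElem?_eq_getElem hi', List.getElem?_eq_getElem (lt_of_lt_of_le hi' h.length_le),
      h.getElem hi']

lemma primrec_prefixB : Primrec₂ (@prefixB n) :=
  primrec_allB
    (p := fun (q : List (Fin n) × List (Fin n)) i => decide (q.1[i]? = q.2[i]?))
    (Primrec.eq.comp
      (Primrec.list_getElem?.comp (Primrec.fst.comp Primrec.fst) Primrec.snd)
      (Primrec.list_getElem?.comp (Primrec.snd.comp Primrec.fst) Primrec.snd)).decide
    (Primrec.list_range.comp (Primrec.list_length.comp Primrec.fst))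

/-- All strings over `Fin n` of length `L`. -/
def allLists (n : ℕ) (L : ℕ) : List (List (Fin n)) :=
  Nat.rec [[]] (fun _ prev => prev.flatMap fun τ => (List.finRange n).map fun a => τ ++ [a]) L

@[simp] lemma allLists_zero : allLists n 0 = [[]] := rfl

lemma allLists_succ (L : ℕ) :
    allLists n (L + 1) =
      (allLists n L).flatMap fun τ => (List.finRange n).map fun a => τ ++ [a] := rfl

lemma mem_allLists {ρ : List (Fin n)} {L : ℕ} : ρ ∈ allLists n L ↔ ρ.length = L := by
  induction L generalizing ρ with
  | zero => simp [List.length_eq_zero_iff]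
  | succ L ih =>
    rw [allLists_succ, List.mem_flatMap]
    constructor
    · rintro ⟨τ, hτ, hmem⟩
      simp only [List.mem_map] at hmem
      obtain ⟨a, -, rfl⟩ := hmem
      simp [ih.1 hτ]
    · intro hlen
      have hne : ρ ≠ [] := by intro h; simp [h] at hlen
      refine ⟨ρ.dropLast, ih.2 (by simp [hlen]), ?_⟩
      simp only [List.mem_map]
      exact ⟨ρ.getLast hne, List.mem_finRange _, by
        rw [← List.concat_eq_append, List.concat_eq_append, List.dropLast_append_getLast hne]⟩

lemma primrec_allLists : Primrec (allLists n) := by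
  have hstep : Primrec₂ fun (_ : ℕ) (prev : List (List (Fin n))) =>
      prev.flatMap fun τ => (List.finRange n).map fun a => τ ++ [a] := by
    have hcc : Primrec fun r : ((ℕ × List (List (Fin n))) × List (Fin n)) × Fin n =>
        r.1.2 ++ [r.2] :=
      Primrec.list_concat.comp (Primrec.snd.comp Primrec.fst) Primrec.snd
    have hmapped : Primrec fun q : (ℕ × List (List (Fin n))) × List (Fin n) =>
        (List.finRange n).map fun a => q.2 ++ [a] :=
      Primrec.list_map (Primrec.const (List.finRange n)) hcc
    exact Primrec.list_flatMap Primrec.snd hmapped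
  exact (Primrec.nat_rec' Primrec.id (Primrec.const [[]])
    (hstep.comp (Primrec.fst.comp Primrec.snd) (Primrec.snd.comp Primrec.snd)).to₂).of_eq
    (fun L => by induction L with
      | zero => rfl
      | succ L ih => simp [allLists_succ, ← ih])

lemma le_foldr_max {l : List ℕ} {x : ℕ} (h : x ∈ l) : x ≤ l.foldr max 0 := by
  induction l with
  | nil => simp at h
  | cons a l ih =>
    rcases List.mem_cons.1 h with rfl | h
    · simp
    · exact le_trans (ih h) (by simp)

lemma nat_rec_ball_iff (P : ℕ → Bool) (m : ℕ) :
    (Nat.rec true (fun e IH => IH && P e) m : Bool) = true ↔ ∀ e < m, P e = true := by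
  induction m with
  | zero => simp
  | succ m ih =>
    show ((Nat.rec true (fun e IH => IH && P e) m : Bool) && P m) = true ↔ _
    rw [Bool.and_eq_true, ih]
    constructor
    · rintro ⟨h1, h2⟩ e he
      rcases Nat.lt_succ_iff_lt_or_eq.1 he with he | rfl
      · exact h1 e he
      · exact h2
    · intro h
      exact ⟨fun e he => h e (Nat.lt_succ_of_lt he), h m (Nat.lt_succ_self m)⟩

/-- Upper bound on codes of strings of length `q.2`. -/
def bound (n : ℕ) (q : List (Fin n) × ℕ) : ℕ :=
  ((allLists n q.2).map Encodable.encode).foldr max 0 + 1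

lemma primrec_bound : Primrec (bound n) :=
  Primrec.succ.comp <| Primrec.list_foldr
    (Primrec.list_map (primrec_allLists.comp Primrec.snd) (Primrec.encode.comp Primrec.snd).to₂)
    (Primrec.const 0)
    (Primrec.nat_max.comp (Primrec.fst.comp Primrec.snd) (Primrec.snd.comp Primrec.snd)).to₂

/-- One step of the bounded universal check. -/
def stepB {n : ℕ} (χ : List (Fin n) → Bool) (q : List (Fin n) × ℕ) (e : ℕ) : Bool :=
  match (Encodable.decode e : Option (List (Fin n))) with
  | none => true
  | some ρ => !(decide (ρ.length = q.2)) || !(χ ρ) || prefixB q.1 ρ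

/-- Bounded universal check: all strings of length `q.2` in the set extend `q.1`. -/
def ballB {n : ℕ} (χ : List (Fin n) → Bool) (q : List (Fin n) × ℕ) : Bool :=
  Nat.rec true (fun e IH => IH && stepB χ q e) (bound n q)

lemma ballB_iff {χ : List (Fin n) → Bool} {q : List (Fin n) × ℕ} :
    ballB χ q = true ↔ ∀ ρ : List (Fin n), ρ.length = q.2 → χ ρ = true → q.1 <+: ρ := by
  rw [ballB, nat_rec_ball_iff]
  constructor
  · intro h ρ hlen hχ
    have hmem : Encodable.encode ρ ∈ (allLists n q.2).map Encodable.encode :=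
      List.mem_map_of_mem (mem_allLists.2 hlen)
    have he : Encodable.encode ρ < bound n q := by
      have := le_foldr_max hmem
      unfold bound; omega
    have := h _ he
    rw [stepB, Encodable.encodek] at this
    simp only [Bool.or_eq_true, Bool.not_eq_true', decide_eq_false_iff_not] at this
    rcases this with ((h1 | h2) | h3)
    · exact absurd hlen h1
    · rw [hχ] at h2; simp at h2
    · exact prefixB_iff.1 h3
  · intro h e _
    rw [stepB]
    cases hdec : (Encodable.decode e : Option (List (Fin n))) with
    | none => rfl
    | some ρ =>
      simp only [Bool.or_eq_true, Bool.not_eq_true', decide_eq_false_iff_not]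
      by_cases hlen : ρ.length = q.2
      · by_cases hχ : χ ρ = true
        · exact Or.inr (prefixB_iff.2 (h ρ hlen hχ))
        · exact Or.inl (Or.inr (by simpa using hχ))
      · exact Or.inl (Or.inl hlen)

lemma computable_ballB {χ : List (Fin n) → Bool} (hχ : Computable χ) :
    Computable (ballB χ) := by
  have hstep : Computable fun p : (List (Fin n) × ℕ) × ℕ => stepB χ p.1 p.2 := by
    have hdec : Computable fun p : (List (Fin n) × ℕ) × ℕ =>
        (Encodable.decode p.2 : Option (List (Fin n))) :=
      Computable.decode.comp Computable.snd
    have hbody : Computable fun r : ((List (Fin n) × ℕ) × ℕ) × List (Fin n) =>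
        !(decide (r.2.length = r.1.1.2)) || !(χ r.2) || prefixB r.1.1.1 r.2 := by
      have h1 : Computable fun r : ((List (Fin n) × ℕ) × ℕ) × List (Fin n) =>
          decide (r.2.length = r.1.1.2) :=
        (Primrec.eq.comp (Primrec.list_length.comp Primrec.snd)
          ((Primrec.snd.comp (Primrec.fst.comp Primrec.fst)))).decide.to_comp
      have h2 : Computable fun r : ((List (Fin n) × ℕ) × ℕ) × List (Fin n) => χ r.2 :=
        hχ.comp Computable.snd
      have h3 : Computable fun r : ((List (Fin n) × ℕ) × ℕ) × List (Fin n) =>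
          prefixB r.1.1.1 r.2 :=
        (primrec_prefixB.comp (Primrec.fst.comp (Primrec.fst.comp Primrec.fst))
          Primrec.snd).to_comp
      exact Primrec.or.to_comp.comp
        (Primrec.or.to_comp.comp (Primrec.not.to_comp.comp h1) (Primrec.not.to_comp.comp h2)) h3
    have hcase : Computable fun p : (List (Fin n) × ℕ) × ℕ =>
        (Option.casesOn ((Encodable.decode p.2 : Option (List (Fin n)))) true
          (fun ρ => !(decide (ρ.length = p.1.2)) || !(χ ρ) || prefixB p.1.1 ρ) : Bool) :=
      Computable.option_casesOn hdec (Computable.const true) hbody.to₂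
    exact hcase.of_eq fun p => by
      rw [stepB]
      cases hd : (Encodable.decode p.2 : Option (List (Fin n))) <;> simp [hd]
  have := Computable.nat_rec (primrec_bound.to_comp) (Computable.const true)
    ((Primrec.and.to_comp.comp (Computable.snd.comp Computable.snd)
      (hstep.comp (Computable.pair Computable.fst (Computable.fst.comp Computable.snd)))).to₂)
  exact this.of_eq fun q => rfl

/-- The full search predicate. -/
def goodB {n : ℕ} (χ : List (Fin n) → Bool) (k e : ℕ) : Bool :=
  match (Encodable.decode e : Option (List (Fin n) × ℕ)) with
  | none => false
  | some q => decide (k ≤ q.2) && decide (q.1.length = k) && ballB χ q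

lemma computable_goodB {χ : List (Fin n) → Bool} (hχ : Computable χ) :
    Computable₂ (goodB χ) := by
  have hdec : Computable fun p : ℕ × ℕ => (Encodable.decode p.2 : Option (List (Fin n) × ℕ)) :=
    Computable.decode.comp Computable.snd
  have hbody : Computable fun r : (ℕ × ℕ) × (List (Fin n) × ℕ) =>
      decide (r.1.1 ≤ r.2.2) && decide (r.2.1.length = r.1.1) && ballB χ r.2 := by
    have h1 : Computable fun r : (ℕ × ℕ) × (List (Fin n) × ℕ) => decide (r.1.1 ≤ r.2.2) :=
      (Primrec.nat_le.comp (Primrec.fst.comp Primrec.fst)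
        (Primrec.snd.comp Primrec.snd)).decide.to_comp
    have h2 : Computable fun r : (ℕ × ℕ) × (List (Fin n) × ℕ) =>
        decide (r.2.1.length = r.1.1) :=
      (Primrec.eq.comp (Primrec.list_length.comp (Primrec.fst.comp Primrec.snd))
        (Primrec.fst.comp Primrec.fst)).decide.to_comp
    have h3 : Computable fun r : (ℕ × ℕ) × (List (Fin n) × ℕ) => ballB χ r.2 :=
      (computable_ballB hχ).comp Computable.snd
    exact Primrec.and.to_comp.comp (Primrec.and.to_comp.comp h1 h2) h3
  have hcase : Computable fun p : ℕ × ℕ =>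
      (Option.casesOn ((Encodable.decode p.2 : Option (List (Fin n) × ℕ))) false
        (fun q => decide (p.1 ≤ q.2) && decide (q.1.length = p.1) && ballB χ q) : Bool) :=
    Computable.option_casesOn hdec (Computable.const false) hbody.to₂
  have hfin : Computable fun p : ℕ × ℕ => goodB χ p.1 p.2 :=
    hcase.of_eq fun p => by
      unfold goodB
      cases hd : (Encodable.decode p.2 : Option (List (Fin n) × ℕ)) <;> simp [hd]
  exact hfin

theorem computable_of_unique_path (hn : 0 < n) (S : Set (List (Fin n)))
    (hS : ComputablePred (· ∈ S)) (f : ℕ → Fin n) (hf : ∀ k, initSeg f k ∈ S)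
    (hiso : ∀ k, ∃ L, k ≤ L ∧ ∀ ρ ∈ S, ρ.length = L → initSeg f k <+: ρ) :
    Computable f := by
  obtain ⟨χ, hχcomp, hχ⟩ := ComputablePred.computable_iff.1 hS
  have hmem : ∀ ρ : List (Fin n), ρ ∈ S ↔ χ ρ = true := fun ρ => by
    change (fun a => a ∈ S) ρ ↔ _; rw [hχ]
  -- existence of a witness for the search
  have hex : ∀ k, ∃ e, goodB χ k e = true := by
    intro k
    obtain ⟨L, hkL, hL⟩ := hiso k
    refine ⟨Encodable.encode (initSeg f k, L), ?_⟩
    rw [goodB, Encodable.encodek]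
    simp only [Bool.and_eq_true, decide_eq_true_eq]
    refine ⟨⟨hkL, by simp⟩, ballB_iff.2 ?_⟩
    intro ρ hlen hρχ
    exact hL ρ ((hmem ρ).2 hρχ) hlen
  set N : ℕ → ℕ := fun k => Nat.find (hex k) with hN
  have hNcomp : Computable N := by
    have hrf : Partrec fun k => Nat.rfind fun e => Part.some (goodB χ k e) :=
      Partrec.rfind ((computable_goodB hχcomp).partrec₂)
    refine Partrec.of_eq_tot hrf fun k => ?_
    refine Nat.mem_rfind.2 ?_
    constructor
    · simpa using Nat.find_spec (hex k)
    · intro m hm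
      simpa using Bool.eq_false_iff.2 fun hc => Nat.find_min (hex k) hm hc
  -- the decoded search result
  set F : ℕ → List (Fin n) :=
    fun k => ((Encodable.decode (N k) : Option (List (Fin n) × ℕ)).map Prod.fst).getD []
    with hF
  have hFcomp : Computable F := by
    refine Computable.option_getD ?_ (Computable.const [])
    exact Computable.option_map (Computable.decode.comp hNcomp)
      (Computable.fst.comp Computable.snd).to₂
  have hFval : ∀ k, F k = initSeg f k := by
    intro k
    have hgood : goodB χ k (N k) = true := Nat.find_spec (hex k)
    unfold goodB at hgood
    cases hd : (Encodable.decode (N k) : Option (List (Fin n) × ℕ)) with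
    | none => rw [hd] at hgood; simp at hgood
    | some q =>
      rw [hd] at hgood
      simp only [Bool.and_eq_true, decide_eq_true_eq] at hgood
      obtain ⟨⟨hkL, hlen⟩, hball⟩ := hgood
      have hpre : q.1 <+: initSeg f q.2 :=
        ballB_iff.1 hball (initSeg f q.2) (by simp) ((hmem _).1 (hf q.2))
      have := eq_initSeg_of_prefix hpre
      rw [hlen] at this
      rw [hF]
      simp [hd, this]
  have : Computable fun k => (F (k + 1)).getD k ⟨0, hn⟩ :=
    (Primrec.list_getD (⟨0, hn⟩ : Fin n)).to_comp.comp
      (hFcomp.comp (Computable.succ)) Computable.id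
  refine this.of_eq fun k => ?_
  rw [hFval (k + 1), List.getD_eq_getElem _ _ (by simp), initSeg_getElem f (Nat.lt_succ_self k)]

lemma initSeg_getD (f : ℕ → Fin n) {k i : ℕ} (h : i < k) (d : Fin n) :
    (initSeg f k).getD i d = f i := by
  rw [List.getD_eq_getElem _ _ (by simpa using h), initSeg_getElem f h]

end SpecialAux

open SpecialAux

/-- A special effectively closed set (a nonempty set of paths of a computable tree
containing no computable member) has cardinality exactly `2 ^ ℵ₀`. -/
theorem special_class_continuum {n : ℕ} (hn : 2 ≤ n) (T : Set (List (Fin n))) (hT : IsTree T)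
    (hTcomp : ComputablePred (· ∈ T))
    (hne : ∃ f : ℕ → Fin n, IsPath T f)
    (hspecial : ∀ f : ℕ → Fin n, IsPath T f → ¬ Computable f) :
    Cardinal.mk {f : ℕ → Fin n | IsPath T f} = 2 ^ Cardinal.aleph0 := by
  classical
  have hn0 : 0 < n := by omega
  have key : ∀ (f : ℕ → Fin n), IsPath T f → ∀ k₀ : ℕ,
      ∃ g, IsPath T g ∧ initSeg g k₀ = initSeg f k₀ ∧ g ≠ f := by
    intro f hf k₀
    by_contra hcon
    push_neg at hcon
    set σ₀ := initSeg f k₀ with hσ₀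
    set S : Set (List (Fin n)) := {τ | τ ∈ T ∧ (τ <+: σ₀ ∨ σ₀ <+: τ)} with hS
    have hSpc : ∀ σ ∈ S, ∀ τ, τ <+: σ → τ ∈ S := by
      rintro σ ⟨hσT, hcomp⟩ τ hpre
      refine ⟨hT σ hσT τ hpre, ?_⟩
      rcases hcomp with h | h
      · exact Or.inl (hpre.trans h)
      · exact prefix_comparable hpre h
    have hfS : ∀ k, initSeg f k ∈ S := by
      intro k
      refine ⟨hf k, ?_⟩
      rcases le_total k k₀ with h | h
      · exact Or.inl (initSeg_prefix f h)
      · exact Or.inr (initSeg_prefix f h)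
    have hScomp : ComputablePred (· ∈ S) := by
      rw [ComputablePred.computable_iff]
      obtain ⟨χ, hχc, hχ⟩ := ComputablePred.computable_iff.1 hTcomp
      refine ⟨fun τ => χ τ && (prefixB τ σ₀ || prefixB σ₀ τ), ?_, ?_⟩
      · exact Primrec.and.to_comp.comp hχc
          (Primrec.or.to_comp.comp
            ((primrec_prefixB.comp Primrec.id (Primrec.const σ₀)).to_comp)
            ((primrec_prefixB.comp (Primrec.const σ₀) Primrec.id).to_comp))
      · funext τ
        have hτT : (τ ∈ T) = (χ τ = true) := congrFun hχ τ
        simp only [hS, Set.mem_setOf_eq, hτT, Bool.and_eq_true, Bool.or_eq_true, prefixB_iff]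
    have hiso : ∀ k, ∃ L, k ≤ L ∧ ∀ ρ ∈ S, ρ.length = L → initSeg f k <+: ρ := by
      intro k
      by_contra hno
      push_neg at hno
      set W : Set (List (Fin n)) :=
        {τ | τ ∈ S ∧ ∃ ρ, ρ ∈ S ∧ τ <+: ρ ∧ k ≤ ρ.length ∧ ¬ initSeg f k <+: ρ} with hW
      have hWpc : ∀ σ ∈ W, ∀ τ, τ <+: σ → τ ∈ W := by
        rintro σ ⟨hσS, ρ, hρ⟩ τ hpre
        exact ⟨hSpc σ hσS τ hpre, ρ, hρ.1, hpre.trans hρ.2.1, hρ.2.2.1, hρ.2.2.2⟩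
      have hWlen : ∀ L, ∃ τ ∈ W, τ.length = L := by
        intro L
        obtain ⟨ρ, hρS, hρlen, hρnp⟩ := hno (max L k) (le_max_right _ _)
        refine ⟨ρ.take L, ⟨hSpc ρ hρS _ (List.take_prefix _ _),
          ρ, hρS, List.take_prefix _ _, by omega, hρnp⟩, by simp [hρlen]⟩
      obtain ⟨g, hg⟩ := koenig hn0 W hWpc hWlen
      have hgpath : IsPath T g := fun m => ((hg m).1).1
      have hgk₀ : initSeg g k₀ = σ₀ := by
        have h1 := (hg k₀).1
        rcases h1.2 with h | h
        · exact h.eq_of_length (by simp [hσ₀])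
        · exact (h.eq_of_length (by simp [hσ₀])).symm
      have hgf : g = f := hcon g hgpath hgk₀
      obtain ⟨-, ρ, -, hpre, -, hnp⟩ := hg k
      rw [hgf] at hpre
      exact hnp hpre
    exact hspecial f hf (computable_of_unique_path hn0 S hScomp f hfS hiso)
  have hsplit : ∀ σ : List (Fin n), (∃ f, IsPath T f ∧ initSeg f σ.length = σ) →
      ∃ τ₁ τ₂ : List (Fin n), (∃ f, IsPath T f ∧ initSeg f τ₁.length = τ₁)
        ∧ (∃ f, IsPath T f ∧ initSeg f τ₂.length = τ₂)
        ∧ σ <+: τ₁ ∧ σ <+: τ₂ ∧ τ₁.length = τ₂.length ∧ σ.length < τ₁.length ∧ τ₁ ≠ τ₂ := by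
    rintro σ ⟨f, hf, hfσ⟩
    obtain ⟨g, hg, hgk, hgf⟩ := key f hf σ.length
    have hexm : ∃ m, g m ≠ f m := by
      by_contra h
      push_neg at h
      exact hgf (funext h)
    obtain ⟨m, hm⟩ := hexm
    have hmge : σ.length ≤ m := by
      by_contra h
      push_neg at h
      apply hm
      rw [← initSeg_getD g h (⟨0, hn0⟩ : Fin n), ← initSeg_getD f h (⟨0, hn0⟩ : Fin n), hgk]
    refine ⟨initSeg f (m + 1), initSeg g (m + 1),
      ⟨f, hf, by simp⟩, ⟨g, hg, by simp⟩, ?_, ?_, by simp, by simp; omega, ?_⟩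
    · rw [← hfσ]
      exact initSeg_prefix f (by omega)
    · rw [← hfσ, ← hgk]
      exact initSeg_prefix g (by omega)
    · intro he
      apply hm
      rw [← initSeg_getD g (Nat.lt_succ_self m) (⟨0, hn0⟩ : Fin n),
        ← initSeg_getD f (Nat.lt_succ_self m) (⟨0, hn0⟩ : Fin n), he]
  -- the embedding of Cantor space
  set Ext : List (Fin n) → Prop := fun σ => ∃ f, IsPath T f ∧ initSeg f σ.length = σ with hExt
  have hExt_nil : Ext [] := by
    obtain ⟨f, hf⟩ := hne
    exact ⟨f, hf, by simp⟩
  choose! τ₁ τ₂ ht₁ ht₂ hp₁ hp₂ hlen12 hlt12 hne12 using hsplit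
  set st : {σ : List (Fin n) // Ext σ} → Bool → {σ : List (Fin n) // Ext σ} :=
    fun x b => if b then ⟨τ₁ x.1, ht₁ x.1 x.2⟩ else ⟨τ₂ x.1, ht₂ x.1 x.2⟩ with hst
  have hst_pre : ∀ x b, x.1 <+: (st x b).1 := by
    intro x b
    cases b
    · exact hp₂ x.1 x.2
    · exact hp₁ x.1 x.2
  have hst_lt : ∀ x b, x.1.length < (st x b).1.length := by
    intro x b
    cases b
    · have := hlt12 x.1 x.2
      have h2 := hlen12 x.1 x.2
      show x.1.length < (τ₂ x.1).length
      omega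
    · exact hlt12 x.1 x.2
  have hst_ne : ∀ x, (st x true).1 ≠ (st x false).1 := fun x => hne12 x.1 x.2
  have hst_len : ∀ x, (st x true).1.length = (st x false).1.length := fun x => hlen12 x.1 x.2
  set θ : List Bool → {σ : List (Fin n) // Ext σ} :=
    fun s => List.rec ⟨[], hExt_nil⟩ (fun b _ ih => st ih b) s with hθ
  set ψ : (ℕ → Bool) → ℕ → {σ : List (Fin n) // Ext σ} :=
    fun x k => θ ((List.ofFn fun i : Fin k => x i).reverse) with hψ
  have hψsucc : ∀ x k, ψ x (k + 1) = st (ψ x k) (x k) := by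
    intro x k
    have hrev : (List.ofFn fun i : Fin (k + 1) => x i).reverse
        = x k :: (List.ofFn fun i : Fin k => x i).reverse := by
      rw [List.ofFn_succ']
      rw [List.concat_eq_append, List.reverse_append]
      simp
    show θ _ = _
    rw [hrev]
  have hψ_mono : ∀ (x : ℕ → Bool) (k m : ℕ), k ≤ m → (ψ x k).1 <+: (ψ x m).1 := by
    intro x k m hkm
    induction m with
    | zero => rw [Nat.le_zero.1 hkm]
    | succ m ih =>
      rcases Nat.lt_succ_iff_lt_or_eq.1 (Nat.lt_succ_of_le hkm) with hlt | rfl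
      · exact (ih (by omega)).trans (by rw [hψsucc]; exact hst_pre _ _)
      · exact List.prefix_refl _
  have hψ_len : ∀ (x : ℕ → Bool) (k : ℕ), k ≤ (ψ x k).1.length := by
    intro x k
    induction k with
    | zero => omega
    | succ k ih =>
      have := hst_lt (ψ x k) (x k)
      rw [← hψsucc] at this
      omega
  set hh : (ℕ → Bool) → ℕ → Fin n := fun x m => (ψ x (m + 1)).1.getD m ⟨0, hn0⟩ with hhh
  have hagree : ∀ (x : ℕ → Bool) (k m : ℕ), m < (ψ x k).1.length →
      (ψ x k).1.getD m ⟨0, hn0⟩ = hh x m := by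
    intro x k m hm
    simp only [hhh]
    rcases le_total (m + 1) k with hle | hle
    · exact getD_prefix (hψ_mono x (m + 1) k hle)
        (lt_of_lt_of_le (Nat.lt_succ_self m) (hψ_len x (m + 1))) _
    · exact (getD_prefix (hψ_mono x k (m + 1) hle) hm _).symm
  have hinit : ∀ (x : ℕ → Bool) (k : ℕ), initSeg (hh x) k = (ψ x k).1.take k := by
    intro x k
    apply List.ext_getElem (by simp [hψ_len x k])
    intro i h1 h2
    have hik : i < k := by simpa using h1
    have hilen : i < (ψ x k).1.length := lt_of_lt_of_le hik (hψ_len x k)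
    rw [initSeg_getElem _ hik, List.getElem_take]
    rw [← List.getD_eq_getElem (ψ x k).1 (⟨0, hn0⟩ : Fin n) hilen]
    exact (hagree x k i hilen).symm
  have hpath : ∀ x, IsPath T (hh x) := by
    intro x k
    rw [hinit]
    obtain ⟨f', hf', hfσ⟩ := (ψ x k).2
    exact hT _ (hfσ ▸ hf' (ψ x k).1.length) _ (List.take_prefix _ _)
  have hinj : Function.Injective hh := by
    intro x y hxy
    by_contra hne'
    have hex : ∃ k, x k ≠ y k := by
      by_contra hc
      push_neg at hc
      exact hne' (funext hc)
    have hk : x (Nat.find hex) ≠ y (Nat.find hex) := Nat.find_spec hex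
    set k := Nat.find hex with hkdef
    have hbelow : ∀ j < k, x j = y j := fun j hj => not_not.1 (Nat.find_min hex hj)
    have hψeq : ψ x k = ψ y k := by
      show θ _ = θ _
      have hofn : (List.ofFn fun i : Fin k => x i) = List.ofFn fun i : Fin k => y i :=
        congrArg List.ofFn (funext fun i : Fin k => hbelow i i.2)
      rw [hofn]
    have hA : ψ x (k + 1) = st (ψ y k) (x k) := by rw [hψsucc, hψeq]
    have hB : ψ y (k + 1) = st (ψ y k) (y k) := hψsucc y k
    have hABne : (ψ x (k + 1)).1 ≠ (ψ y (k + 1)).1 := by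
      rw [hA, hB]
      cases hxk : x k <;> cases hyk : y k <;> rw [hxk, hyk] at hk <;> try simp at hk
      · exact fun hcc => (hst_ne (ψ y k)) hcc.symm
      · exact hst_ne (ψ y k)
    have hABlen : (ψ x (k + 1)).1.length = (ψ y (k + 1)).1.length := by
      rw [hA, hB]
      cases hxk : x k <;> cases hyk : y k <;> rw [hxk, hyk] at hk <;> try simp at hk
      · exact (hst_len (ψ y k)).symm
      · exact hst_len (ψ y k)
    apply hABne
    apply List.ext_getElem hABlen
    intro i h1 h2
    rw [← List.getD_eq_getElem (ψ x (k+1)).1 (⟨0, hn0⟩ : Fin n) h1,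
      ← List.getD_eq_getElem (ψ y (k+1)).1 (⟨0, hn0⟩ : Fin n) h2,
      hagree x (k+1) i h1, hagree y (k+1) i h2, hxy]
  -- cardinal arithmetic
  have hupper : Cardinal.mk {f : ℕ → Fin n | IsPath T f} ≤ 2 ^ Cardinal.aleph0 := by
    have h1 : Cardinal.mk {f : ℕ → Fin n | IsPath T f} ≤ Cardinal.mk (ℕ → Fin n) :=
      Cardinal.mk_subtype_le _
    have h2 : Cardinal.mk (ℕ → Fin n) = (n : Cardinal) ^ Cardinal.aleph0 := by
      rw [← Cardinal.mk_fin n, ← Cardinal.mk_nat, Cardinal.power_def]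
    have h3 : (n : Cardinal) ^ Cardinal.aleph0 ≤ (2 ^ Cardinal.aleph0) ^ Cardinal.aleph0 := by
      apply Cardinal.power_le_power_right
      exact le_of_lt (lt_of_lt_of_le (Cardinal.nat_lt_aleph0 n) (Cardinal.cantor _).le)
    have h4 : ((2 : Cardinal) ^ Cardinal.aleph0) ^ Cardinal.aleph0 = 2 ^ Cardinal.aleph0 := by
      rw [← Cardinal.power_mul, Cardinal.aleph0_mul_aleph0]
    calc Cardinal.mk {f : ℕ → Fin n | IsPath T f} ≤ Cardinal.mk (ℕ → Fin n) := h1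
      _ = (n : Cardinal) ^ Cardinal.aleph0 := h2
      _ ≤ (2 ^ Cardinal.aleph0) ^ Cardinal.aleph0 := h3
      _ = 2 ^ Cardinal.aleph0 := h4
  have hlower : 2 ^ Cardinal.aleph0 ≤ Cardinal.mk {f : ℕ → Fin n | IsPath T f} := by
    have hemb : Function.Injective
        (fun x : ℕ → Bool => (⟨hh x, hpath x⟩ : {f : ℕ → Fin n | IsPath T f})) := by
      intro a b hab
      exact hinj (congrArg Subtype.val hab)
    have h5 := Cardinal.mk_le_of_injective hemb
    have h6 : Cardinal.mk (ℕ → Bool) = 2 ^ Cardinal.aleph0 := by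
      rw [← Cardinal.mk_bool, ← Cardinal.mk_nat, Cardinal.power_def]
    rw [← h6]
    exact h5
  exact le_antisymm hupper hlower
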